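/- Let (λ_1,...,λ_m) solve the system Σ_{(b_k,...,b_1)∈Ξ_k} ∏_j λ_j^{b_j}/b_j! = 1 (k=1,...,m), and define γ(k,k') as the sum of weights of directed paths in G_m from (k,k') to (0,0), where an edge ((ℓ+1,c),(ℓ,c'')) has weight λ_ℓ^{c-c''}/(c-c'')! and γ(0,0) = 1. Then for every k ∈ {1,...,m}: λ_k > 0 and 1 = γ(k,k) > γ(k,k+1) > ... > γ(k,m). -/

import Mathlib

open Finset

/-- `sumFrom b k'` is `b_k + b_{k-1} + ⋯ + b_{k'}`, where the `Fin k`-index `j`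
encodes the subscript `j+1` (so `b ⟨0,_⟩ = b₁`, …, `b ⟨k-1,_⟩ = b_k`). -/
def sumFrom {k : ℕ} (b : Fin k → ℕ) (k' : ℕ) : ℕ :=
  ∑ ℓ : Fin k, if k' ≤ ℓ.val + 1 then b ℓ else 0

/-- The set `Ξ̂_k` of non-negative integer vectors `(b_k, …, b_1)` with
`b_k + ⋯ + b_{k'} + k' ≤ k + 1` for all `1 ≤ k' ≤ k` and total sum at least `1`. -/
def XiHat (k : ℕ) : Set (Fin k → ℕ) :=
  {b | (∀ k', 1 ≤ k' → k' ≤ k → sumFrom b k' + k' ≤ k + 1) ∧ 1 ≤ ∑ ℓ, b ℓ}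

/-- `Ξ_k`: vectors of `Ξ̂_k` having no proper left truncated subvector
`(b_{k'}, …, b_1)` in `Ξ̂_{k'}` for any `k' < k`. -/
def Xi (k : ℕ) : Set (Fin k → ℕ) :=
  {b | b ∈ XiHat k ∧
    ∀ k' (h : k' < k), (fun j : Fin k' => b (Fin.castLE h.le j)) ∉ XiHat k'}

/-- The equality system `∑_{(b_k,…,b_1) ∈ Ξ_k} ∏_j λ_j^{b_j}/b_j! = 1` for `k = 1, …, m`. -/
def eqSystem (m : ℕ) (lam : ℕ → ℝ) : Prop :=
  ∀ k, 1 ≤ k → k ≤ m →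
    ∑ᶠ b ∈ Xi k, ∏ j : Fin k, lam (j.val + 1) ^ (b j) / (Nat.factorial (b j)) = 1

/-- `gamma lam k k'` is the total weight of directed paths on `G_m` from `(k,k')`
to `(0,0)`, where an edge from `(ℓ+1, c)` to `(ℓ, c'')` (with `c ≥ c''`) has
weight `λ_{ℓ+1}^{c-c''}/(c-c'')!` and `gamma lam 0 0 = 1`. -/
noncomputable def gamma (lam : ℕ → ℝ) : ℕ → ℕ → ℝ
  | 0, 0 => 1
  | 0, _ + 1 => 0
  | k + 1, k' =>
      ∑ c ∈ Finset.Icc k k',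
        lam (k + 1) ^ (k' - c) / (Nat.factorial (k' - c)) * gamma lam k c

attribute [local instance] Classical.propDecidable

lemma sumFrom_one {k : ℕ} (b : Fin k → ℕ) : sumFrom b 1 = ∑ ℓ, b ℓ := by
  simp [sumFrom]

lemma sumFrom_anti {k : ℕ} (b : Fin k → ℕ) {i i' : ℕ} (h : i ≤ i') :
    sumFrom b i' ≤ sumFrom b i := by
  refine Finset.sum_le_sum fun ℓ _ => ?_
  by_cases hc : i' ≤ ℓ.val + 1
  · rw [if_pos hc, if_pos (le_trans h hc)]
  · simp [hc]

lemma le_sumFrom_one {k : ℕ} (b : Fin k → ℕ) (ℓ : Fin k) : b ℓ ≤ sumFrom b 1 := by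
  rw [sumFrom_one]
  exact Finset.single_le_sum (fun _ _ => Nat.zero_le _) (mem_univ ℓ)

lemma sumFrom_eq_zero {k : ℕ} (b : Fin k → ℕ) {i : ℕ} (h : k + 1 ≤ i) :
    sumFrom b i = 0 := by
  refine Finset.sum_eq_zero fun ℓ _ => ?_
  rw [if_neg]
  omega

lemma sumFrom_snoc {k : ℕ} (b : Fin (k+1) → ℕ) (i : ℕ) (hi : i ≤ k + 1) :
    sumFrom b i = b (Fin.last k) + sumFrom (Fin.init b) i := by
  rw [sumFrom, Fin.sum_univ_castSucc, if_pos (by simpa using hi)]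
  rw [add_comm, sumFrom]
  congr 1

lemma sumFrom_castLE {k k' : ℕ} (h : k' ≤ k) (b : Fin k → ℕ) {i : ℕ} (hi : i ≤ k' + 1) :
    sumFrom b i = sumFrom (fun j : Fin k' => b (Fin.castLE h j)) i + sumFrom b (k' + 1) := by
  classical
  simp only [sumFrom]
  rw [← Finset.sum_filter_add_sum_filter_not univ (fun ℓ : Fin k => ℓ.val < k')]
  congr 1
  · refine Finset.sum_bij' (i := fun (ℓ : Fin k) (hℓ : ℓ ∈ univ.filter (fun ℓ : Fin k => ℓ.val < k')) =>
        (⟨ℓ.val, by simp only [mem_filter] at hℓ; exact hℓ.2⟩ : Fin k'))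
      (j := fun (a : Fin k') _ => Fin.castLE h a) ?_ ?_ ?_ ?_ ?_
    · intro a _; exact mem_univ _
    · intro a _
      simp only [mem_filter, mem_univ, true_and]
      exact a.isLt
    · intro a _; rfl
    · intro a _; rfl
    · intro a _; rfl
  · rw [Finset.sum_filter]
    refine Finset.sum_congr rfl fun ℓ _ => ?_
    by_cases hc : k' ≤ ℓ.val
    · rw [if_pos (by simpa using hc), if_pos (by omega), if_pos (by omega)]
    · rw [if_neg (by simpa using hc), if_neg (by omega)]
section

noncomputable def wt (lam : ℕ → ℝ) {k : ℕ} (b : Fin k → ℕ) : ℝ :=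
  ∏ j : Fin k, lam (j.val + 1) ^ (b j) / (Nat.factorial (b j))

noncomputable def U (lam : ℕ → ℝ) (j : ℕ) : ℕ → ℕ → ℝ
  | 0, _ => 0
  | k + 1, k' =>
      if k = j then lam (j + 1) ^ (k' - j) / (Nat.factorial (k' - j))
      else ∑ c ∈ Finset.Icc (k + 1) k',
        lam (k + 1) ^ (k' - c) / (Nat.factorial (k' - c)) * U lam j k c

def ExcCond (k' j : ℕ) {k : ℕ} (b : Fin k → ℕ) : Prop :=
  sumFrom b 1 + j = k' ∧ sumFrom b (j + 1) + j = k' ∧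
    ∀ ℓ, j + 1 ≤ ℓ → ℓ + 1 ≤ k → sumFrom b (ℓ + 1) + ℓ + 1 ≤ k'

noncomputable def FS (k k' j : ℕ) : Finset (Fin k → ℕ) :=
  (Fintype.piFinset fun _ : Fin k => Finset.range (k' + 1)).filter (ExcCond k' j)

lemma mem_FS {k k' j : ℕ} (b : Fin k → ℕ) : b ∈ FS k k' j ↔ ExcCond k' j b := by
  rw [FS, mem_filter]
  refine ⟨fun h => h.2, fun h => ⟨?_, h⟩⟩
  rw [Fintype.mem_piFinset]
  intro ℓ
  rw [Finset.mem_range]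
  have := le_sumFrom_one b ℓ
  have := h.1
  omega

lemma wt_snoc (lam : ℕ → ℝ) {k : ℕ} (b : Fin (k+1) → ℕ) :
    wt lam b = wt lam (Fin.init b) *
      (lam (k + 1) ^ (b (Fin.last k)) / (Nat.factorial (b (Fin.last k)))) := by
  rw [wt, Fin.prod_univ_castSucc, wt]
  rfl

lemma excCond_snoc {k k' j c : ℕ} (hj : j < k) (hc1 : k + 1 ≤ c) (hc2 : c ≤ k')
    (b : Fin (k+1) → ℕ) (hb : b (Fin.last k) = k' - c) :
    ExcCond k' j b ↔ ExcCond c j (Fin.init b) := by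
  have h0 := sumFrom_snoc b 1 (by omega)
  have hj1 := sumFrom_snoc b (j + 1) (by omega)
  constructor
  · rintro ⟨h1, h2, h3⟩
    refine ⟨by omega, by omega, fun ℓ hℓ1 hℓ2 => ?_⟩
    have hs := sumFrom_snoc b (ℓ + 1) (by omega)
    have := h3 ℓ hℓ1 (by omega)
    omega
  · rintro ⟨h1, h2, h3⟩
    refine ⟨by omega, by omega, fun ℓ hℓ1 hℓ2 => ?_⟩
    have hs := sumFrom_snoc b (ℓ + 1) (by omega)
    rcases eq_or_lt_of_le hℓ2 with heq | hlt
    · have hz : sumFrom (Fin.init b) (ℓ + 1) = 0 :=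
        sumFrom_eq_zero _ (by omega)
      omega
    · have := h3 ℓ hℓ1 (by omega)
      omega

lemma exc_sum (lam : ℕ → ℝ) (j : ℕ) : ∀ k k', j < k → k ≤ k' →
    ∑ b ∈ FS k k' j, wt lam b = U lam j k k' := by
  have base : ∀ k', j + 1 ≤ k' → ∑ b ∈ FS (j+1) k' j, wt lam b = U lam j (j+1) k' := by
    intro k' hk'
    have hsingle : FS (j+1) k' j = {fun ℓ : Fin (j+1) => if ℓ.val = j then k' - j else 0} := by
      ext b
      rw [mem_FS, Finset.mem_singleton]
      constructor
      · rintro ⟨h1, h2, _⟩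
        have hlast : sumFrom b (j + 1) = b (Fin.last j) := by
          rw [sumFrom_snoc b (j+1) le_rfl, sumFrom_eq_zero _ (by omega)]
          omega
        have hsum : sumFrom b 1 = b (Fin.last j) + sumFrom (Fin.init b) 1 :=
          sumFrom_snoc b 1 (by omega)
        have hz : sumFrom (Fin.init b) 1 = 0 := by omega
        rw [sumFrom_one] at hz
        funext ℓ
        rcases eq_or_lt_of_le (Nat.lt_succ_iff.mp ℓ.isLt) with he | hl
        · have : ℓ = Fin.last j := Fin.ext he
          rw [this, if_pos (by simp [Fin.last])]
          omega
        · rw [if_neg (by omega)]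
          have : Fin.init b ⟨ℓ.val, hl⟩ = 0 :=
            Finset.sum_eq_zero_iff.mp hz _ (mem_univ _)
          simpa [Fin.init, Fin.castSucc, Fin.ext_iff] using this
      · rintro rfl
        have hlast : (Fin.last j).val = j := rfl
        have hsf : ∀ i, i ≤ j + 1 →
            sumFrom (fun ℓ : Fin (j+1) => if ℓ.val = j then k' - j else 0) i = k' - j := by
          intro i hi
          rw [sumFrom_snoc _ i hi]
          have h1 : (if (Fin.last j).val = j then k' - j else 0) = k' - j := if_pos rfl
          have h2 : sumFrom (Fin.init fun ℓ : Fin (j+1) => if ℓ.val = j then k' - j else 0) i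
              = 0 := by
            refine Finset.sum_eq_zero fun ℓ _ => ?_
            have hne : ℓ.val ≠ j := by have := ℓ.isLt; omega
            simp [Fin.init, hne]
          simp only [h1, h2, add_zero]
        refine ⟨by rw [hsf 1 (by omega)]; omega, by rw [hsf (j+1) le_rfl]; omega,
          fun ℓ hℓ1 hℓ2 => by omega⟩
    rw [hsingle, Finset.sum_singleton, U, if_pos rfl, wt, Fin.prod_univ_castSucc]
    have h1 : ∀ ℓ : Fin j,
        lam ((Fin.castSucc ℓ).val + 1) ^ ((if (Fin.castSucc ℓ).val = j then k' - j else 0)) /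
          (Nat.factorial (if (Fin.castSucc ℓ).val = j then k' - j else 0)) = 1 := by
      intro ℓ
      have hne : ℓ.val ≠ j := by have := ℓ.isLt; omega
      simp [Fin.coe_castSucc, hne]
    rw [Finset.prod_congr rfl (fun ℓ _ => h1 ℓ), Finset.prod_const_one, one_mul]
    simp [Fin.last]
  have main : ∀ k, j + 1 ≤ k → ∀ k', k ≤ k' → ∑ b ∈ FS k k' j, wt lam b = U lam j k k' := by
    refine Nat.le_induction ?_ ?_
    · intro k' h2; exact base k' h2
    · intro k hk IH k' hk'
      have hmaps : ∀ b ∈ FS (k+1) k' j, k' - b (Fin.last k) ∈ Finset.Icc (k+1) k' := by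
        intro b hb
        rw [mem_FS] at hb
        obtain ⟨h1, h2, h3⟩ := hb
        have hs := sumFrom_snoc b (k+1) le_rfl
        have hz : sumFrom (Fin.init b) (k+1) = 0 := sumFrom_eq_zero _ le_rfl
        have := h3 k (by omega) le_rfl
        rw [Finset.mem_Icc]
        omega
      rw [← Finset.sum_fiberwise_of_maps_to hmaps (wt lam)]
      have hU : U lam j (k+1) k' = ∑ c ∈ Finset.Icc (k+1) k',
          lam (k+1) ^ (k'-c) / (Nat.factorial (k'-c)) * U lam j k c := by
        rw [U, if_neg (by omega)]
      rw [hU]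
      refine Finset.sum_congr rfl fun c hc => ?_
      rw [Finset.mem_Icc] at hc
      have hlastb : ∀ b ∈ FS (k+1) k' j, b (Fin.last k) + (k + 1) ≤ k' := by
        intro b hb
        rw [mem_FS] at hb
        obtain ⟨h1, h2, h3⟩ := hb
        have hs := sumFrom_snoc b (k+1) le_rfl
        have hz : sumFrom (Fin.init b) (k+1) = 0 := sumFrom_eq_zero _ le_rfl
        have := h3 k (by omega) le_rfl
        omega
      rw [← IH c (le_trans (Nat.le_succ k) hc.1), Finset.mul_sum]
      refine Finset.sum_bij'
        (i := fun (b : Fin (k+1) → ℕ) _ => Fin.init b)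
        (j := fun (y : Fin k → ℕ) _ => Fin.snoc y (k' - c)) ?_ ?_ ?_ ?_ ?_
      · intro b hb
        rw [Finset.mem_filter] at hb
        have hb1 := hb.1
        have hble := hlastb b hb.1
        have hbl : b (Fin.last k) = k' - c := by omega
        rw [mem_FS] at hb1 ⊢
        exact (excCond_snoc (by omega) hc.1 hc.2 b hbl).mp hb1
      · intro y hy
        rw [Finset.mem_filter]
        have hsl : (Fin.snoc y (k' - c) : Fin (k+1) → ℕ) (Fin.last k) = k' - c :=
          Fin.snoc_last _ _
        constructor
        · rw [mem_FS]
          refine (excCond_snoc (by omega) hc.1 hc.2 _ hsl).mpr ?_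
          rw [Fin.init_snoc]
          exact (mem_FS y).mp hy
        · show k' - (Fin.snoc y (k' - c) : Fin (k+1) → ℕ) (Fin.last k) = c
          rw [hsl]
          omega
      · intro b hb
        rw [Finset.mem_filter] at hb
        have hble := hlastb b hb.1
        have hbl : b (Fin.last k) = k' - c := by omega
        show Fin.snoc (Fin.init b) (k' - c) = b
        rw [← hbl, Fin.snoc_init_self]
      · intro y _
        exact Fin.init_snoc _ _
      · intro b hb
        rw [Finset.mem_filter] at hb
        have hble := hlastb b hb.1
        have hbl : b (Fin.last k) = k' - c := by omega
        show wt lam b = lam (k+1) ^ (k' - c) / (Nat.factorial (k' - c)) * wt lam (Fin.init b)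
        rw [wt_snoc lam b, hbl, mul_comm]
  intro k k' h1 h2
  exact main k h1 k' h2

lemma trunc_mem_XiHat_iff {k k' : ℕ} (h : k' < k) (b : Fin k → ℕ) :
    (fun j : Fin k' => b (Fin.castLE h.le j)) ∈ XiHat k' ↔
      ((∀ i, 1 ≤ i → i ≤ k' → sumFrom b i + i ≤ k' + 1 + sumFrom b (k' + 1)) ∧
        sumFrom b (k' + 1) + 1 ≤ sumFrom b 1) := by
  have hts : ∀ i : ℕ, i ≤ k' + 1 →
      sumFrom b i = sumFrom (fun j : Fin k' => b (Fin.castLE h.le j)) i + sumFrom b (k' + 1) :=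
    fun i hi => sumFrom_castLE h.le b hi
  constructor
  · rintro ⟨h1, h2⟩
    rw [← sumFrom_one] at h2
    refine ⟨fun i hi1 hi2 => ?_, ?_⟩
    · have := h1 i hi1 hi2
      have := hts i (by omega)
      omega
    · have := hts 1 (by omega)
      omega
  · rintro ⟨h1, h2⟩
    refine ⟨fun i hi1 hi2 => ?_, ?_⟩
    · have := h1 i hi1 hi2
      have := hts i (by omega)
      omega
    · rw [← sumFrom_one]
      have := hts 1 (by omega)
      omega

lemma xi_mem_iff {k : ℕ} (hk : 1 ≤ k) (b : Fin k → ℕ) :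
    b ∈ Xi k ↔ ∃ j, j < k ∧ ExcCond k j b := by
  constructor
  · rintro ⟨⟨Hhat, Hsum⟩, Htr⟩
    rw [← sumFrom_one] at Hsum
    have Htr' : ∀ k'', k'' < k →
        ¬((∀ i, 1 ≤ i → i ≤ k'' → sumFrom b i + i ≤ k'' + 1 + sumFrom b (k'' + 1)) ∧
          sumFrom b (k'' + 1) + 1 ≤ sumFrom b 1) :=
      fun k'' hkk hcon => Htr k'' hkk ((trunc_mem_XiHat_iff hkk b).mpr hcon)
    have hs1k : sumFrom b 1 ≤ k := by have := Hhat 1 le_rfl hk; omega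
    set j := k - sumFrom b 1 with hjdef
    have hjk : j < k := by omega
    -- Step A : flatness
    have hflat : sumFrom b (j + 1) = sumFrom b 1 := by
      by_contra hne
      have hlt : sumFrom b (j + 1) < sumFrom b 1 :=
        lt_of_le_of_ne (sumFrom_anti b (by omega)) hne
      have hj1 : 1 ≤ j := by
        rcases Nat.eq_zero_or_pos j with h0 | h1
        · rw [h0] at hlt; simp only [Nat.zero_add] at hlt; omega
        · exact h1
      have hPex : ∃ q, sumFrom b (q + 1) < sumFrom b 1 := ⟨j, hlt⟩
      classical
      set p := Nat.find hPex with hpdef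
      have hPp : sumFrom b (p + 1) < sumFrom b 1 := Nat.find_spec hPex
      have hpj : p ≤ j := Nat.find_min' hPex hlt
      have hp1 : 1 ≤ p := by
        rcases Nat.eq_zero_or_pos p with h0 | h1
        · rw [h0] at hPp; simp only [Nat.zero_add] at hPp; omega
        · exact h1
      have hflatbelow : ∀ q, q < p → sumFrom b (q + 1) = sumFrom b 1 := by
        intro q hq
        have hnot := Nat.find_min hPex hq
        have := sumFrom_anti b (show 1 ≤ q + 1 by omega)
        omega
      obtain ⟨K, hKmem, hKmax⟩ := Finset.exists_max_image (Finset.Icc p (k - 1))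
        (fun ℓ => sumFrom b (ℓ + 1) + ℓ) ⟨p, by rw [Finset.mem_Icc]; omega⟩
      rw [Finset.mem_Icc] at hKmem
      refine Htr' K (by omega) ⟨fun i hi1 hiK => ?_, ?_⟩
      · rcases le_or_gt i p with hip | hpi
        · -- i ≤ p : flat region
          have hfi : sumFrom b i = sumFrom b 1 := by
            have := hflatbelow (i - 1) (by omega)
            rwa [show i - 1 + 1 = i by omega] at this
          have hmax := hKmax (k - 1) (by rw [Finset.mem_Icc]; omega)
          rw [show k - 1 + 1 = k by omega] at hmax
          have hsk : sumFrom b k + (k - 1) ≤ sumFrom b (K + 1) + K := hmax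
          omega
        · have hmax := hKmax (i - 1) (by rw [Finset.mem_Icc]; omega)
          rw [show i - 1 + 1 = i by omega] at hmax
          omega
      · have := sumFrom_anti b (show p + 1 ≤ K + 1 by omega)
        omega
    -- Step B : strictly above diagonal
    have hstrict : ∀ ℓ, j + 1 ≤ ℓ → ℓ + 1 ≤ k → sumFrom b (ℓ + 1) + ℓ + 1 ≤ k := by
      intro ℓ hℓ1 hℓ2
      by_contra hcon
      have hHh := Hhat (ℓ + 1) (by omega) (by omega)
      refine Htr' ℓ (by omega) ⟨fun i hi1 hiℓ => ?_, ?_⟩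
      · have := Hhat i hi1 (by omega)
        omega
      · omega
    exact ⟨j, hjk, by omega, by omega, hstrict⟩
  · rintro ⟨j, hj, h1, h2, h3⟩
    have hanti1 : sumFrom b (j + 1) ≤ sumFrom b 1 := sumFrom_anti b (by omega)
    refine ⟨⟨fun i hi1 hik => ?_, ?_⟩, fun k'' hkk hmem => ?_⟩
    · rcases le_or_gt i (j + 1) with hij | hij
      · have ha1 : sumFrom b i ≤ sumFrom b 1 := sumFrom_anti b hi1
        have ha2 : sumFrom b (j + 1) ≤ sumFrom b i := sumFrom_anti b hij
        omega
      · have := h3 (i - 1) (by omega) (by omega)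
        rw [show i - 1 + 1 = i by omega] at this
        omega
    · rw [← sumFrom_one]; omega
    · rw [trunc_mem_XiHat_iff hkk b] at hmem
      obtain ⟨hA, hB⟩ := hmem
      have hk''j : j + 1 ≤ k'' := by
        by_contra hcon
        have : sumFrom b (j + 1) ≤ sumFrom b (k'' + 1) := sumFrom_anti b (by omega)
        omega
      have hAj := hA (j + 1) (by omega) hk''j
      have h3k := h3 k'' hk''j (by omega)
      omega

lemma gamma_zero_zero (lam : ℕ → ℝ) : gamma lam 0 0 = 1 := by rw [gamma]

lemma gamma_zero (lam : ℕ → ℝ) {q : ℕ} (h : 1 ≤ q) : gamma lam 0 q = 0 := by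
  obtain ⟨d, rfl⟩ := Nat.exists_eq_add_of_le h
  rw [show 1 + d = d + 1 by omega, gamma]

lemma gamma_succ (lam : ℕ → ℝ) (k k' : ℕ) :
    gamma lam (k + 1) k' = ∑ c ∈ Finset.Icc k k',
      lam (k + 1) ^ (k' - c) / (Nat.factorial (k' - c)) * gamma lam k c := by
  rw [gamma]

lemma xi_sum (lam : ℕ → ℝ) {k : ℕ} (hk : 1 ≤ k) :
    (∑ᶠ b ∈ Xi k, ∏ j : Fin k, lam (j.val + 1) ^ (b j) / (Nat.factorial (b j)))
      = ∑ j ∈ Finset.range k, U lam j k k := by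
  classical
  have hset : Xi k = ↑((Finset.range k).biUnion fun j => FS k k j) := by
    ext b
    rw [Finset.coe_biUnion]
    simp only [Set.mem_iUnion, Finset.mem_coe, Finset.mem_range, mem_FS, xi_mem_iff hk]
    constructor
    · rintro ⟨j, hj, hc⟩; exact ⟨j, hj, hc⟩
    · rintro ⟨j, hj, hc⟩; exact ⟨j, hj, hc⟩
  have hbody : (∑ᶠ b ∈ Xi k, ∏ j : Fin k, lam (j.val + 1) ^ (b j) / (Nat.factorial (b j)))
      = ∑ᶠ b ∈ Xi k, wt lam b := rfl
  rw [hbody, hset, finsum_mem_coe_finset, Finset.sum_biUnion ?hdisj]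
  · exact Finset.sum_congr rfl fun j hj =>
      exc_sum lam j k k (Finset.mem_range.mp hj) le_rfl
  case hdisj =>
    intro a _ b _ hab
    simp only [Function.onFun]
    rw [Finset.disjoint_left]
    intro x hxa hxb
    have h1 := ((mem_FS x).mp hxa).1
    have h2 := ((mem_FS x).mp hxb).1
    exact hab (by omega)

lemma gamma_decomp (lam : ℕ → ℝ) :
    ∀ K k', K + 1 ≤ k' → gamma lam (K + 1) k'
      = ∑ j ∈ Finset.range (K + 1), U lam j (K + 1) k' * gamma lam j j := by
  intro K
  induction K with
  | zero =>
      intro k' _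
      rw [gamma_succ]
      rw [Finset.sum_eq_single_of_mem 0 (by simp)
        (fun c _ hc => by
          rw [gamma_zero lam (by omega), mul_zero])]
      rw [Finset.sum_range_succ, Finset.sum_range_zero, zero_add, U, if_pos rfl,
        gamma_zero_zero, mul_one, zero_add]
  | succ K IH =>
      intro k' hk'
      rw [gamma_succ]
      have hsplit : Finset.Icc (K + 1) k' = insert (K + 1) (Finset.Icc (K + 2) k') := by
        conv_rhs => rw [show K + 2 = K + 1 + 1 from rfl, Finset.Icc_add_one_left_eq_Ioc]
        exact (Finset.Ioc_insert_left (by omega)).symm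
      rw [hsplit, Finset.sum_insert (by rw [Finset.mem_Icc]; omega)]
      have hIH : ∀ c ∈ Finset.Icc (K + 2) k',
          lam (K + 2) ^ (k' - c) / (Nat.factorial (k' - c)) * gamma lam (K + 1) c
          = ∑ j ∈ Finset.range (K + 1),
              lam (K + 2) ^ (k' - c) / (Nat.factorial (k' - c)) *
                (U lam j (K + 1) c * gamma lam j j) := by
        intro c hc
        rw [Finset.mem_Icc] at hc
        rw [IH c (by omega), Finset.mul_sum]
      rw [Finset.sum_congr rfl hIH, Finset.sum_comm]
      have hswap : ∀ j ∈ Finset.range (K + 1),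
          (∑ c ∈ Finset.Icc (K + 2) k',
            lam (K + 2) ^ (k' - c) / (Nat.factorial (k' - c)) *
              (U lam j (K + 1) c * gamma lam j j))
          = U lam j (K + 2) k' * gamma lam j j := by
        intro j hj
        rw [Finset.mem_range] at hj
        rw [U, if_neg (by omega), Finset.sum_mul]
        exact Finset.sum_congr rfl fun c _ => by ring
      rw [Finset.sum_congr rfl hswap, Finset.sum_range_succ (n := K + 1)]
      have hUlast : U lam (K + 1) (K + 2) k' * gamma lam (K + 1) (K + 1)
          = lam (K + 2) ^ (k' - (K + 1)) / (Nat.factorial (k' - (K + 1))) *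
              gamma lam (K + 1) (K + 1) := by
        rw [U, if_pos rfl]
      rw [hUlast]
      ring

lemma gamma_row (lam : ℕ → ℝ) (K q : ℕ) (h : K ≤ q) :
    gamma lam (K + 1) q = ∑ i ∈ Finset.range (q - K + 1),
      lam (K + 1) ^ i / (Nat.factorial i) * gamma lam K (q - i) := by
  rw [gamma_succ]
  refine Finset.sum_nbij' (i := fun c => q - c) (j := fun i => q - i) ?_ ?_ ?_ ?_ ?_
  · intro c hc
    simp only [Finset.mem_Icc] at hc
    simp only [Finset.mem_range]
    omega
  · intro i hi
    simp only [Finset.mem_range] at hi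
    simp only [Finset.mem_Icc]
    omega
  · intro c hc
    simp only [Finset.mem_Icc] at hc
    show q - (q - c) = c
    omega
  · intro i hi
    simp only [Finset.mem_range] at hi
    show q - (q - i) = i
    omega
  · intro c hc
    simp only [Finset.mem_Icc] at hc
    show _ = lam (K + 1) ^ (q - c) / (Nat.factorial (q - c)) * gamma lam K (q - (q - c))
    rw [show q - (q - c) = c by omega]

/-- If `(λ_1,…,λ_m)` solves the equation system, then for every `k ∈ {1,…,m}`:
`λ_k > 0` and `1 = γ(k,k) > γ(k,k+1) > ⋯ > γ(k,m)`. -/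
theorem gamma_strict_anti (m : ℕ) (lam : ℕ → ℝ) (h : eqSystem m lam) :
    ∀ k, 1 ≤ k → k ≤ m → 0 < lam k ∧ gamma lam k k = 1 ∧
      ∀ k', k ≤ k' → k' < m → gamma lam k (k' + 1) < gamma lam k k' := by
  have h' : ∀ k, 1 ≤ k → k ≤ m →
      (∑ᶠ b ∈ Xi k, ∏ j : Fin k, lam (j.val + 1) ^ (b j) / (Nat.factorial (b j))) = 1 := h
  intro k
  induction k using Nat.strong_induction_on with
  | _ k IH =>
    intro hk1 hkm
    obtain ⟨K, rfl⟩ : ∃ K, k = K + 1 := ⟨k - 1, by omega⟩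
    have hgjj : ∀ j, j < K + 1 → gamma lam j j = 1 := by
      intro j hj
      rcases Nat.eq_zero_or_pos j with rfl | hj1
      · exact gamma_zero_zero lam
      · exact (IH j hj hj1 (by omega)).2.1
    have hE : ∑ j ∈ Finset.range (K + 1), U lam j (K + 1) (K + 1) = 1 := by
      rw [← xi_sum lam (show 1 ≤ K + 1 by omega)]
      exact h' (K + 1) (by omega) hkm
    have hgkk : gamma lam (K + 1) (K + 1) = 1 := by
      rw [gamma_decomp lam K (K + 1) le_rfl, ← hE]
      exact Finset.sum_congr rfl fun j hj => by
        rw [hgjj j (Finset.mem_range.mp hj), mul_one]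
    have hUK : U lam K (K + 1) (K + 1) = lam (K + 1) := by
      rw [U, if_pos rfl, show K + 1 - K = 1 by omega, pow_one]
      simp
    have hUj : ∀ j ∈ Finset.range K, U lam j (K + 1) (K + 1) = U lam j K (K + 1) := by
      intro j hj
      rw [Finset.mem_range] at hj
      rw [U, if_neg (by omega), Finset.Icc_self, Finset.sum_singleton]
      simp
    have hgK1 : gamma lam K (K + 1) = ∑ j ∈ Finset.range K, U lam j K (K + 1) := by
      rcases Nat.eq_zero_or_pos K with rfl | hK1
      · rw [Finset.range_zero, Finset.sum_empty]
        exact gamma_zero lam (by omega)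
      · obtain ⟨J, rfl⟩ : ∃ J, K = J + 1 := ⟨K - 1, by omega⟩
        rw [gamma_decomp lam J (J + 1 + 1) (by omega)]
        exact Finset.sum_congr rfl fun j hj => by
          rw [hgjj j (by have := Finset.mem_range.mp hj; omega), mul_one]
    have hsum2 : ∑ j ∈ Finset.range K, U lam j (K + 1) (K + 1) = gamma lam K (K + 1) := by
      rw [hgK1]; exact Finset.sum_congr rfl hUj
    have hlamval : gamma lam K (K + 1) = 1 - lam (K + 1) := by
      have hs : ∑ j ∈ Finset.range (K + 1), U lam j (K + 1) (K + 1)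
          = gamma lam K (K + 1) + lam (K + 1) := by
        rw [Finset.sum_range_succ, hsum2, hUK]
      rw [hE] at hs
      linarith
    have hlampos : 0 < lam (K + 1) := by
      rcases Nat.eq_zero_or_pos K with rfl | hK1
      · have h0 : gamma lam 0 (0 + 1) = 0 := gamma_zero lam (by omega)
        rw [h0] at hlamval
        linarith
      · have hmono := (IH K (by omega) hK1 (by omega)).2.2 K le_rfl (by omega)
        have hKK := hgjj K (by omega)
        rw [hKK] at hmono
        linarith
    refine ⟨hlampos, hgkk, ?_⟩
    intro k' hk'1 hk'm
    set N := k' - K with hN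
    have hN1 : 1 ≤ N := by omega
    have h1 : gamma lam (K + 1) (k' + 1) = ∑ i ∈ Finset.range (N + 2),
        lam (K + 1) ^ i / (Nat.factorial i) * gamma lam K (k' + 1 - i) := by
      rw [gamma_row lam K (k' + 1) (by omega), show k' + 1 - K + 1 = N + 2 by omega]
    have h2 : gamma lam (K + 1) k' = ∑ i ∈ Finset.range (N + 1),
        lam (K + 1) ^ i / (Nat.factorial i) * gamma lam K (k' - i) := by
      rw [gamma_row lam K k' (by omega), show k' - K + 1 = N + 1 by omega]
    rw [h1, h2, Finset.sum_range_succ (n := N + 1), Finset.sum_range_succ (n := N),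
      Finset.sum_range_succ (n := N)]
    rw [show k' + 1 - (N + 1) = K by omega, show k' + 1 - N = K + 1 by omega,
      show k' - N = K by omega, hgjj K (by omega), hlamval]
    simp only [mul_one]
    have hA : ∑ i ∈ Finset.range N,
        lam (K + 1) ^ i / (Nat.factorial i) * gamma lam K (k' + 1 - i)
        ≤ ∑ i ∈ Finset.range N,
        lam (K + 1) ^ i / (Nat.factorial i) * gamma lam K (k' - i) := by
      refine Finset.sum_le_sum fun i hi => ?_
      rw [Finset.mem_range] at hi
      have hpos : (0:ℝ) ≤ lam (K + 1) ^ i / (Nat.factorial i) := by positivity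
      refine mul_le_mul_of_nonneg_left ?_ hpos
      rw [show k' + 1 - i = (k' - i) + 1 by omega]
      rcases Nat.eq_zero_or_pos K with rfl | hK1
      · rw [gamma_zero lam (by omega), gamma_zero lam (by omega)]
      · exact le_of_lt ((IH K (by omega) hK1 (by omega)).2.2 (k' - i) (by omega) (by omega))
    have hB : lam (K + 1) ^ (N + 1) / (Nat.factorial (N + 1))
        < lam (K + 1) ^ N / (Nat.factorial N) * lam (K + 1) := by
      rw [pow_succ, div_mul_eq_mul_div]
      have hx : (0:ℝ) < lam (K + 1) ^ N * lam (K + 1) := by positivity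
      have hfact : ((Nat.factorial N : ℝ)) < ((Nat.factorial (N + 1) : ℝ)) := by
        exact_mod_cast (Nat.factorial_lt (by omega)).mpr (by omega)
      have hfpos : (0:ℝ) < (Nat.factorial N : ℝ) := by positivity
      exact div_lt_div_of_pos_left hx hfpos hfact
    have hexp : lam (K + 1) ^ N / (Nat.factorial N) * (1 - lam (K + 1))
        = lam (K + 1) ^ N / (Nat.factorial N)
          - lam (K + 1) ^ N / (Nat.factorial N) * lam (K + 1) := by ring
    linarith
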